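/- arXiv:2410.04771 — 6 statements merged into one kernel-verified Lean document; each statement's English description precedes it below -/
import Mathlib

section
/- Let α and γ be finite strings over a linearly ordered alphabet with γ nonempty. If α is co-lexicographically strictly smaller than γ and γ is not a suffix of α, then for every finite string β, α is co-lexicographically strictly smaller than βγ. -/
/-- Co-lexicographic order on finite strings: lexicographic order on reverses. -/
def ListColex {Sig : Type*} [LinearOrder Sig] (a b : List Sig) : Prop :=
  List.Lex (· < ·) a.reverse b.reverse

lemma lex_append {Sig : Type*} {r : Sig → Sig → Prop} {a b : List Sig}
    (h : List.Lex r a b) (c : List Sig) : List.Lex r a (b ++ c) := by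
  induction h with
  | nil => exact List.Lex.nil
  | rel hr => exact List.Lex.rel hr
  | cons _ ih => exact List.Lex.cons ih

/-- If `γ` is nonempty, `α ≺ γ` co-lexicographically and `γ` is not a suffix of `α`,
then `α ≺ βγ` for every string `β`. -/
theorem stmt_1 {Sig : Type*} [LinearOrder Sig] (α γ : List Sig) (hγ : γ ≠ [])
    (h : ListColex α γ) (hsuf : ¬ γ <:+ α) :
    ∀ β : List Sig, ListColex α (β ++ γ) := by
  intro β
  unfold ListColex at *
  rw [List.reverse_append]
  exact lex_append h _
end

section
/- Let α₁ ≺ α₂ ≺ ⋯ ≺ α_p be finite strings over a linearly ordered alphabet, co-lexicographically increasing, and let γ be a nonempty string such that α_p ≺ α₁γ. Then for all integers k ≥ 0, the strings α₁γ^k ≺ ⋯ ≺ α_pγ^k ≺ α₁γ^{k+1} ≺ ⋯ ≺ α_pγ^{k+1} form a co-lexicographically strictly increasing sequence; in particular, the doubly-indexed sequence (α_iγ^k) ordered by (k,i) lexicographically is strictly increasing in co-lex order. -/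
/-- Co-lexicographic order on finite strings: lexicographic order on reverses. -/
def ColexStr {Sig : Type*} [LinearOrder Sig] (a b : List Sig) : Prop :=
  List.Lex (· < ·) a.reverse b.reverse

/-- `k`-fold concatenation of a string with itself. -/
def listPow {Sig : Type*} (γ : List Sig) (k : ℕ) : List Sig :=
  (List.replicate k γ).flatten

lemma colex_trans {Sig : Type*} [LinearOrder Sig] {a b c : List Sig}
    (h1 : ColexStr a b) (h2 : ColexStr b c) : ColexStr a c :=
  List.lex_trans (fun h₁ h₂ => lt_trans h₁ h₂) h1 h2

lemma colex_append_same {Sig : Type*} [LinearOrder Sig] {a b : List Sig} (c : List Sig)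
    (h : ColexStr a b) : ColexStr (a ++ c) (b ++ c) := by
  unfold ColexStr at *
  rw [List.reverse_append, List.reverse_append]
  exact List.Lex.append_left _ h _

lemma listPow_succ {Sig : Type*} (γ : List Sig) (k : ℕ) :
    listPow γ (k + 1) = γ ++ listPow γ k := by
  simp only [listPow, List.replicate_succ, List.flatten_cons]

/-- If `α₀ ≺ ⋯ ≺ α_n` are co-lexicographically increasing strings, `γ` is nonempty and
`α_n ≺ α₀γ`, then the doubly-indexed family `α_i γ^k`, ordered lexicographically by
`(k, i)`, is strictly increasing in co-lex order. -/
theorem stmt_2 {Sig : Type*} [LinearOrder Sig] (n : ℕ) (α : Fin (n + 1) → List Sig)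
    (γ : List Sig) (hγ : γ ≠ [])
    (hmono : ∀ i j : Fin (n + 1), i < j → ColexStr (α i) (α j))
    (hlast : ColexStr (α (Fin.last n)) (α 0 ++ γ)) :
    ∀ (k k' : ℕ) (i i' : Fin (n + 1)), (k < k' ∨ (k = k' ∧ i < i')) →
      ColexStr (α i ++ listPow γ k) (α i' ++ listPow γ k') := by
  -- same level, increasing index
  have hsame : ∀ (k : ℕ) (i i' : Fin (n + 1)), i < i' →
      ColexStr (α i ++ listPow γ k) (α i' ++ listPow γ k) := fun k i i' h =>
    colex_append_same _ (hmono i i' h)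
  -- step from level k to level k+1
  have hstep : ∀ (k : ℕ) (i i' : Fin (n + 1)),
      ColexStr (α i ++ listPow γ k) (α i' ++ listPow γ (k + 1)) := by
    intro k i i'
    have h1 : ColexStr (α i ++ listPow γ k) (α (Fin.last n) ++ listPow γ k) ∨
        i = Fin.last n := by
      rcases lt_or_eq_of_le (Fin.le_last i) with h | h
      · exact Or.inl (hsame k _ _ h)
      · exact Or.inr h
    have h2 : ColexStr (α (Fin.last n) ++ listPow γ k) (α 0 ++ listPow γ (k + 1)) := by
      have := colex_append_same (listPow γ k) hlast
      rwa [List.append_assoc, ← listPow_succ] at this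
    have h3 : ColexStr (α 0 ++ listPow γ (k + 1)) (α i' ++ listPow γ (k + 1)) ∨
        (0 : Fin (n + 1)) = i' := by
      rcases (Fin.zero_le i').lt_or_eq with h | h
      · exact Or.inl (hsame (k + 1) _ _ h)
      · exact Or.inr h
    rcases h1 with h1 | h1 <;> rcases h3 with h3 | h3
    · exact colex_trans h1 (colex_trans h2 h3)
    · exact colex_trans h1 (h3 ▸ h2)
    · exact colex_trans (h1 ▸ h2) h3
    · rw [h1]; rw [← h3]; exact h2
  intro k k' i i' h
  rcases h with h | ⟨rfl, h⟩
  · clear hγ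
    induction k' with
    | zero => omega
    | succ m ih =>
      rcases Nat.lt_or_ge k m with hm | hm
      · exact colex_trans (ih hm) (hstep m i' i')
      · have : k = m := by omega
        subst this
        exact hstep k i i'
  · exact hsame k i i' h
end

section
/- Let A be a DFA with state set Q and suppose S = {u₁, …, u_p} ⊆ Q is entangled, i.e., there exists a co-lexicographically monotone sequence of strings (α_t) such that every u ∈ S satisfies δ(s, α_t) = u for infinitely many t. Then for every two distinct states u, v ∈ S, the open co-lex intervals (inf I_u, sup I_u) and (inf I_v, sup I_v) have a nonempty intersection. -/
/-- Co-lexicographic order on finite strings: lexicographic order on reverses. -/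
def StrColex {Sig : Type*} [LinearOrder Sig] (a b : List Sig) : Prop :=
  List.Lex (· < ·) a.reverse b.reverse

/-- Reflexive co-lexicographic order. -/
def ColexLe {Sig : Type*} [LinearOrder Sig] (a b : List Sig) : Prop :=
  a = b ∨ StrColex a b

/-- A finite or left-infinite string, represented by its sequence of characters read
from the right end (`none` signals that the string is exhausted). -/
def CStr (Sig : Type*) := ℕ → Option Sig

/-- The representation of a finite string as a `CStr`. -/
def toCStr {Sig : Type*} (a : List Sig) : CStr Sig := fun i => a.reverse[i]?

/-- The left-infinite string `γ^ω = ⋯γγγ` (for nonempty `γ`) as a `CStr`. -/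
def omegaCStr {Sig : Type*} (γ : List Sig) : CStr Sig :=
  fun i => γ.reverse[i % γ.length]?

/-- Strict co-lexicographic order on finite or left-infinite strings: reading from the
right, at the first position where the two strings differ, either the first string is
exhausted or its character is smaller. -/
def cstrLt {Sig : Type*} [LinearOrder Sig] (s t : CStr Sig) : Prop :=
  ∃ j, (∀ i, i < j → s i = t i) ∧
    ((s j = none ∧ t j ≠ none) ∨ ∃ a b, s j = some a ∧ t j = some b ∧ a < b)

/-- Non-strict co-lexicographic order on finite or left-infinite strings. -/
def cstrLe {Sig : Type*} [LinearOrder Sig] (s t : CStr Sig) : Prop :=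
  s = t ∨ cstrLt s t

/-- `w` is a co-lexicographic lower bound of the set `A` of finite strings. -/
def IsColexLB {Sig : Type*} [LinearOrder Sig] (w : CStr Sig) (A : Set (List Sig)) : Prop :=
  ∀ a ∈ A, cstrLe w (toCStr a)

/-- `w` is a co-lexicographic upper bound of the set `A` of finite strings. -/
def IsColexUB {Sig : Type*} [LinearOrder Sig] (w : CStr Sig) (A : Set (List Sig)) : Prop :=
  ∀ a ∈ A, cstrLe (toCStr a) w

/-- `w` is the co-lexicographic infimum of the set `A` of finite strings. -/
def IsColexInf {Sig : Type*} [LinearOrder Sig] (w : CStr Sig) (A : Set (List Sig)) : Prop :=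
  IsColexLB w A ∧ ∀ w', IsColexLB w' A → cstrLe w' w

/-- `w` is the co-lexicographic supremum of the set `A` of finite strings. -/
def IsColexSup {Sig : Type*} [LinearOrder Sig] (w : CStr Sig) (A : Set (List Sig)) : Prop :=
  IsColexUB w A ∧ ∀ w', IsColexUB w' A → cstrLe w w'

/-- The extension of a (total) DFA transition function to strings. -/
def deltaStar {Q Sig : Type*} (δ : Q → Sig → Q) (q : Q) (a : List Sig) : Q :=
  a.foldl δ q

/-- `Ireach δ s u` is the set `I_u` of strings leading from the source `s` to `u`. -/
def Ireach {Q Sig : Type*} (δ : Q → Sig → Q) (s u : Q) : Set (List Sig) :=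
  {a | deltaStar δ s a = u}

/-- Membership of a finite string in the open co-lex interval `(lo, hi)`. -/
def inOpenInterval {Sig : Type*} [LinearOrder Sig] (lo hi : CStr Sig) (a : List Sig) : Prop :=
  cstrLt lo (toCStr a) ∧ cstrLt (toCStr a) hi

/-- A set `S` of states is entangled: there is a co-lexicographically monotone sequence
of strings hitting every state of `S` infinitely often. -/
def Entangled {Q Sig : Type*} [LinearOrder Sig] (δ : Q → Sig → Q) (s : Q) (S : Set Q) : Prop :=
  ∃ a : ℕ → List Sig,
    ((∀ t t', t ≤ t' → ColexLe (a t) (a t')) ∨ (∀ t t', t ≤ t' → ColexLe (a t') (a t))) ∧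
    ∀ u ∈ S, ∀ t, ∃ t', t ≤ t' ∧ deltaStar δ s (a t') = u

section Aux
variable {Sig : Type*} [LinearOrder Sig]

lemma lex_cstrLt {l m : List Sig} (h : List.Lex (· < ·) l m) :
    ∃ j : ℕ, (∀ i : ℕ, i < j → l[i]? = m[i]?) ∧
      ((l[j]? = none ∧ m[j]? ≠ none) ∨
        ∃ a b, l[j]? = some a ∧ m[j]? = some b ∧ a < b) := by
  induction h with
  | nil =>
    exact ⟨0, fun i hi => absurd hi (Nat.not_lt_zero i), Or.inl ⟨rfl, by simp⟩⟩
  | @cons a l m _ ih =>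
    obtain ⟨j, e, d⟩ := ih
    refine ⟨j + 1, ?_, ?_⟩
    · intro i hi
      cases i with
      | zero => rfl
      | succ i => exact e i (Nat.lt_of_succ_lt_succ hi)
    · simpa using d
  | @rel a l b m hab =>
    exact ⟨0, fun i hi => absurd hi (Nat.not_lt_zero i), Or.inr ⟨a, b, rfl, rfl, hab⟩⟩

lemma colex_cstrLt {a b : List Sig} (h : StrColex a b) :
    cstrLt (toCStr a) (toCStr b) := lex_cstrLt h

lemma cstrLt_trans {s t r : CStr Sig} (h1 : cstrLt s t) (h2 : cstrLt t r) :
    cstrLt s r := by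
  obtain ⟨j1, e1, d1⟩ := h1
  obtain ⟨j2, e2, d2⟩ := h2
  rcases lt_trichotomy j1 j2 with h | h | h
  · refine ⟨j1, fun i hi => (e1 i hi).trans (e2 i (hi.trans h)), ?_⟩
    have ht : t j1 = r j1 := e2 j1 h
    rcases d1 with ⟨hs, htne⟩ | ⟨a, b, ha, hb, hab⟩
    · exact Or.inl ⟨hs, ht ▸ htne⟩
    · exact Or.inr ⟨a, b, ha, ht ▸ hb, hab⟩
  · subst h
    refine ⟨j1, fun i hi => (e1 i hi).trans (e2 i hi), ?_⟩
    rcases d1 with ⟨hs, htne⟩ | ⟨a, b, ha, hb, hab⟩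
    · rcases d2 with ⟨ht, hrne⟩ | ⟨c, d, hc, hd, hcd⟩
      · exact absurd ht htne
      · exact Or.inl ⟨hs, by simp [hd]⟩
    · rcases d2 with ⟨ht, hrne⟩ | ⟨c, d, hc, hd, hcd⟩
      · exact absurd ht (by simp [hb])
      · have hbc : b = c := by rw [hb] at hc; exact Option.some.inj hc
        exact Or.inr ⟨a, d, ha, hd, hab.trans (hbc ▸ hcd)⟩
  · refine ⟨j2, fun i hi => (e1 i (hi.trans h)).trans (e2 i hi), ?_⟩
    have hs : s j2 = t j2 := e1 j2 h
    rcases d2 with ⟨ht, hrne⟩ | ⟨c, d, hc, hd, hcd⟩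
    · exact Or.inl ⟨hs.trans ht, hrne⟩
    · exact Or.inr ⟨c, d, hs.trans hc, hd, hcd⟩

lemma cstrLe_lt_trans {s t r : CStr Sig} (h1 : cstrLe s t) (h2 : cstrLt t r) :
    cstrLt s r := by
  rcases h1 with rfl | h1
  · exact h2
  · exact cstrLt_trans h1 h2

lemma cstrLt_le_trans {s t r : CStr Sig} (h1 : cstrLt s t) (h2 : cstrLe t r) :
    cstrLt s r := by
  rcases h2 with rfl | h2
  · exact h1
  · exact cstrLt_trans h1 h2

end Aux

/-- If `S` is an entangled set of states of a DFA, then the open co-lex intervals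
`(inf I_u, sup I_u)` and `(inf I_v, sup I_v)` of any two distinct `u, v ∈ S`
intersect. -/
theorem stmt_4 {Q Sig : Type*} [LinearOrder Sig]
    (δ : Q → Sig → Q) (s : Q) (S : Set Q) (hS : Entangled δ s S)
    (u v : Q) (hu : u ∈ S) (hv : v ∈ S) (huv : u ≠ v)
    (infU supU infV supV : CStr Sig)
    (hiu : IsColexInf infU (Ireach δ s u)) (hsu : IsColexSup supU (Ireach δ s u))
    (hiv : IsColexInf infV (Ireach δ s v)) (hsv : IsColexSup supV (Ireach δ s v)) :
    ∃ α : List Sig, inOpenInterval infU supU α ∧ inOpenInterval infV supV α := by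
  obtain ⟨a, hmono, hhit⟩ := hS
  obtain ⟨t1, _, h1⟩ := hhit u hu 0
  obtain ⟨t2, ht12, h2⟩ := hhit v hv t1
  obtain ⟨t3, ht23, h3⟩ := hhit u hu t2
  obtain ⟨t4, ht34, h4⟩ := hhit v hv t3
  obtain ⟨t5, ht45, h5⟩ := hhit u hu t4
  have hne : ∀ i j : ℕ, deltaStar δ s (a i) ≠ deltaStar δ s (a j) → a i ≠ a j :=
    fun i j hd he => hd (by rw [he])
  rcases hmono with hinc | hdec
  · have step : ∀ i j : ℕ, i ≤ j → deltaStar δ s (a i) ≠ deltaStar δ s (a j) →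
        cstrLt (toCStr (a i)) (toCStr (a j)) := by
      intro i j hij hd
      rcases hinc i j hij with he | hc
      · exact absurd he (hne i j hd)
      · exact colex_cstrLt hc
    have l12 := step t1 t2 ht12 (by rw [h1, h2]; exact huv)
    have l23 := step t2 t3 ht23 (by rw [h2, h3]; exact huv.symm)
    have l34 := step t3 t4 ht34 (by rw [h3, h4]; exact huv)
    have l45 := step t4 t5 ht45 (by rw [h4, h5]; exact huv.symm)
    refine ⟨a t3, ⟨?_, ?_⟩, ?_, ?_⟩
    · exact cstrLe_lt_trans (hiu.1 (a t1) h1) (cstrLt_trans l12 l23)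
    · exact cstrLt_le_trans (cstrLt_trans l34 l45) (hsu.1 (a t5) h5)
    · exact cstrLe_lt_trans (hiv.1 (a t2) h2) l23
    · exact cstrLt_le_trans l34 (hsv.1 (a t4) h4)
  · have step : ∀ i j : ℕ, i ≤ j → deltaStar δ s (a i) ≠ deltaStar δ s (a j) →
        cstrLt (toCStr (a j)) (toCStr (a i)) := by
      intro i j hij hd
      rcases hdec i j hij with he | hc
      · exact absurd he.symm (hne i j hd)
      · exact colex_cstrLt hc
    have l21 := step t1 t2 ht12 (by rw [h1, h2]; exact huv)
    have l32 := step t2 t3 ht23 (by rw [h2, h3]; exact huv.symm)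
    have l43 := step t3 t4 ht34 (by rw [h3, h4]; exact huv)
    have l54 := step t4 t5 ht45 (by rw [h4, h5]; exact huv.symm)
    refine ⟨a t3, ⟨?_, ?_⟩, ?_, ?_⟩
    · exact cstrLe_lt_trans (hiu.1 (a t5) h5) (cstrLt_trans l54 l43)
    · exact cstrLt_le_trans (cstrLt_trans l32 l21) (hsu.1 (a t1) h1)
    · exact cstrLe_lt_trans (hiv.1 (a t4) h4) l43
    · exact cstrLt_le_trans l32 (hsv.1 (a t2) h2)
end

section
/- Let G = (V, E) be the intersection graph of a family of open real intervals {(ℓ_u, r_u) : u ∈ V} with ℓ_u < r_u, with t = |V| vertices, and suppose every clique of G has size at most p'. Then for every p with 1 ≤ p ≤ p', the number of cliques of size exactly p in G is at most t · binom(p' − 1, p − 1). -/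
/-- In the intersection graph of `t` open real intervals whose maximum clique has
size at most `p'`, the number of cliques of size exactly `p` (with `1 ≤ p ≤ p'`) is
at most `t * (p' - 1).choose (p - 1)`. -/
theorem stmt_6 {V : Type*} [Fintype V] (ℓ r : V → ℝ) (hlr : ∀ u, ℓ u < r u)
    (p p' : ℕ)
    (hmax : ∀ K : Finset V,
      (∀ u ∈ K, ∀ v ∈ K, (Set.Ioo (ℓ u) (r u) ∩ Set.Ioo (ℓ v) (r v)).Nonempty) →
      K.card ≤ p')
    (hp1 : 1 ≤ p) (hpp' : p ≤ p') :
    {K : Finset V | K.card = p ∧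
        ∀ u ∈ K, ∀ v ∈ K, (Set.Ioo (ℓ u) (r u) ∩ Set.Ioo (ℓ v) (r v)).Nonempty}.ncard
      ≤ Fintype.card V * (p' - 1).choose (p - 1) := by
  classical
  set P : Finset V → Prop := fun K => K.card = p ∧
        ∀ u ∈ K, ∀ v ∈ K, (Set.Ioo (ℓ u) (r u) ∩ Set.Ioo (ℓ v) (r v)).Nonempty with hP
  haveI : DecidablePred P := Classical.decPred P
  have key : {K : Finset V | P K} = ↑(Finset.univ.filter P) := by
    ext K
    simp
  rw [key, Set.ncard_coe_finset]
  set F := Finset.univ.filter P with hF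
  have hmemF : ∀ K : Finset V, K ∈ F ↔ P K := by
    intro K
    rw [hF, Finset.mem_filter]
    simp
  rcases isEmpty_or_nonempty V with hV | hV
  · have hF0 : F.card = 0 := by
      rw [Finset.card_eq_zero, Finset.eq_empty_iff_forall_notMem]
      intro K hK
      obtain ⟨hKp, -⟩ := (hmemF K).mp hK
      have h1 := Finset.card_le_univ K
      have h2 : Fintype.card V = 0 := Fintype.card_eq_zero
      omega
    rw [hF0]
    exact Nat.zero_le _
  · set Q : V → V → Prop := fun u v => v ≠ u ∧ ℓ v ≤ ℓ u ∧ ℓ u < r v with hQ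
    haveI : ∀ u, DecidablePred (Q u) := fun u => Classical.decPred (Q u)
    set S : V → Finset V := fun u => Finset.univ.filter (Q u) with hS
    have hmemS : ∀ u v, v ∈ S u ↔ (v ≠ u ∧ ℓ v ≤ ℓ u ∧ ℓ u < r v) := by
      intro u v
      rw [hS]
      simp only [Finset.mem_filter, Finset.mem_univ, true_and]
      exact Iff.rfl
    have hScard : ∀ u, (S u).card ≤ p' - 1 := by
      intro u
      have hclique : ∀ v ∈ insert u (S u), ℓ v ≤ ℓ u ∧ ℓ u < r v := by
        intro v hv
        rcases Finset.mem_insert.mp hv with rfl | hv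
        · exact ⟨le_refl _, hlr v⟩
        · obtain ⟨-, h1, h2⟩ := (hmemS u v).mp hv
          exact ⟨h1, h2⟩
      have h1 : (insert u (S u)).card ≤ p' := by
        apply hmax
        intro v hv w hw
        obtain ⟨hv1, hv2⟩ := hclique v hv
        obtain ⟨hw1, hw2⟩ := hclique w hw
        have hm : ℓ u < min (r v) (r w) := lt_min hv2 hw2
        have hmv := min_le_left (r v) (r w)
        have hmw := min_le_right (r v) (r w)
        refine ⟨(ℓ u + min (r v) (r w)) / 2, ?_, ?_⟩ <;>
          simp only [Set.mem_Ioo] <;> constructor <;> linarith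
      have h2 : u ∉ S u := by
        intro hu
        exact ((hmemS u u).mp hu).1 rfl
      rw [Finset.card_insert_of_notMem h2] at h1
      omega
    set g : Finset V → V := fun K =>
      if h : K.Nonempty then (K.exists_max_image ℓ h).choose else Classical.arbitrary V
      with hgdef
    have hg : ∀ K : Finset V, (h : K.Nonempty) → g K ∈ K ∧ ∀ v ∈ K, ℓ v ≤ ℓ (g K) := by
      intro K h
      have hsp := (K.exists_max_image ℓ h).choose_spec
      rw [hgdef]
      simp only [dif_pos h]
      exact ⟨hsp.1, hsp.2⟩
    have hcard : F.card ≤ (Finset.univ.sigma (fun u => (S u).powersetCard (p - 1))).card := by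
      apply Finset.card_le_card_of_injOn
        (fun K => (⟨g K, K.erase (g K)⟩ : Σ _ : V, Finset V))
      · intro K hK
        obtain ⟨hKp, hKcl⟩ := (hmemF K).mp hK
        have hne : K.Nonempty := Finset.card_pos.mp (by omega)
        obtain ⟨hgK, hmaxK⟩ := hg K hne
        simp only [Finset.mem_coe, Finset.mem_sigma, Finset.mem_univ, true_and, Finset.mem_powersetCard]
        constructor
        · intro v hv
          rw [Finset.mem_erase] at hv
          obtain ⟨hvne, hvK⟩ := hv
          rw [hmemS]
          refine ⟨hvne, hmaxK v hvK, ?_⟩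
          obtain ⟨x, hx1, hx2⟩ := hKcl (g K) hgK v hvK
          exact lt_trans hx1.1 hx2.2
        · rw [Finset.card_erase_of_mem hgK, hKp]
      · intro K hK K' hK' heq
        rw [Finset.mem_coe] at hK hK'
        obtain ⟨hKp, -⟩ := (hmemF K).mp hK
        obtain ⟨hKp', -⟩ := (hmemF K').mp hK'
        have hne : K.Nonempty := Finset.card_pos.mp (by omega)
        have hne' : K'.Nonempty := Finset.card_pos.mp (by omega)
        obtain ⟨hgK, -⟩ := hg K hne
        obtain ⟨hgK', -⟩ := hg K' hne'
        obtain ⟨h1, h2⟩ := Sigma.mk.inj_iff.mp heq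
        have h2' : K.erase (g K) = K'.erase (g K') := eq_of_heq h2
        calc K = insert (g K) (K.erase (g K)) := (Finset.insert_erase hgK).symm
          _ = insert (g K') (K'.erase (g K')) := by rw [h2', h1]
          _ = K' := Finset.insert_erase hgK'
    calc F.card ≤ (Finset.univ.sigma (fun u => (S u).powersetCard (p - 1))).card := hcard
      _ = ∑ u : V, ((S u).powersetCard (p - 1)).card := Finset.card_sigma _ _
      _ ≤ ∑ _u : V, (p' - 1).choose (p - 1) := by
          apply Finset.sum_le_sum
          intro u _
          rw [Finset.card_powersetCard]
          exact Nat.choose_le_choose _ (hScard u)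
      _ = Fintype.card V * (p' - 1).choose (p - 1) := by
          rw [Finset.sum_const, Finset.card_univ, smul_eq_mul]
end

section
/- Let A = (Q, Σ, δ, s, F) be a DFA in which the reversed transition relation is deterministic (i.e., for every state v and character a, there is at most one state u with δ(u, a) = v) and in which every state can reach the unique final state t (F = {t}). Then all states of A are pairwise distinguishable under the Myhill–Nerode relation: for every two distinct states u ≠ v there exists a string α with exactly one of δ(u, α) ∈ F, δ(v, α) ∈ F holding. -/
theorem foldlM_inj {Q Sig : Type*} (δ : Q → Sig → Option Q) (t : Q)
    (hrev : ∀ u u' a v, δ u a = some v → δ u' a = some v → u = u') :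
    ∀ (l : List Sig) (u v : Q), l.foldlM δ u = some t → l.foldlM δ v = some t → u = v := by
  intro l
  induction l with
  | nil => intro u v hu hv; simp [List.foldlM] at hu hv; subst hu hv; rfl
  | cons a l ih =>
    intro u v hu hv
    simp only [List.foldlM_cons] at hu hv
    cases hu' : δ u a with
    | none => rw [hu'] at hu; simp at hu
    | some u' =>
      cases hv' : δ v a with
      | none => rw [hv'] at hv; simp at hv
      | some v' =>
        rw [hu'] at hu; rw [hv'] at hv
        simp only [Option.bind_eq_bind, Option.bind_some] at hu hv
        exact hrev u v a u' hu' (ih u' v' hu hv ▸ hv')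

/-- A reverse-deterministic DFA (partial transition function) in which every state can
reach the unique final state `t` has all states pairwise distinguishable under the
Myhill-Nerode relation. -/
theorem stmt_12 {Q Sig : Type*} (δ : Q → Sig → Option Q) (t : Q)
    (hrev : ∀ u u' a v, δ u a = some v → δ u' a = some v → u = u')
    (hco : ∀ u : Q, ∃ a : List Sig, a.foldlM δ u = some t) :
    ∀ u v : Q, u ≠ v → ∃ a : List Sig,
      Xor' (a.foldlM δ u = some t) (a.foldlM δ v = some t) := by
  intro u v huv
  obtain ⟨a, ha⟩ := hco u
  by_cases hb : a.foldlM δ v = some t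
  · exact absurd (foldlM_inj δ t hrev a u v ha hb) huv
  · exact ⟨a, Or.inl ⟨ha, hb⟩⟩
end

section
/- Let A = (Q, Σ, δ, s, F) be a DFA and let u', u'', v ∈ Q with δ(u', a) = v and δ(u'', b) = v where a ≺ b are characters, and suppose u' is reachable from s (so I_{u'} ≠ ∅). Then the co-lex infimum inf I_v of the set I_v of strings reaching v does not end with the character b; more precisely, every string in I_v ending with b is co-lexicographically strictly larger than some string in I_v ending with a, so removing the transition (u'', b, v) does not change inf I_v. -/
/-- If `δ(u', a) = v` and `δ(u'', b) = v` with `a ≺ b` and `u'` is reachable, then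
every string in `I_v` ending with `b` is co-lexicographically strictly larger than
some string in `I_v` ending with `a`; consequently `inf I_v` does not end with `b`. -/
theorem stmt_18 {Q Sig : Type*} [LinearOrder Sig]
    (δ : Q → Sig → Q) (s u' u'' v : Q) (a b : Sig) (hab : a < b)
    (ha : δ u' a = v) (hb : δ u'' b = v)
    (hacc : ∃ x : List Sig, deltaStar δ s x = u') :
    (∀ β : List Sig, deltaStar δ s (β ++ [b]) = v →
       ∃ α : List Sig, deltaStar δ s (α ++ [a]) = v ∧ StrColex (α ++ [a]) (β ++ [b]))
    ∧ (∀ w : CStr Sig, IsColexInf w (Ireach δ s v) → w 0 ≠ some b) := by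


  obtain ⟨x, hx⟩ := hacc
  have hxa : deltaStar δ s (x ++ [a]) = v := by
    simp only [deltaStar, List.foldl_append, List.foldl_cons, List.foldl_nil]
    simp only [deltaStar] at hx
    rw [hx, ha]
  have htoc : ∀ (l : List Sig) (c : Sig), toCStr (l ++ [c]) 0 = some c := by
    intro l c
    simp [toCStr]
  constructor
  · intro β hβ
    refine ⟨x, hxa, ?_⟩
    unfold StrColex
    simp only [List.reverse_append, List.reverse_singleton, List.singleton_append]
    exact List.Lex.rel hab
  · intro w hw hb0
    have hle := hw.1 (x ++ [a]) hxa
    rcases hle with h | ⟨j, hlt, hj⟩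
    · rw [h, htoc] at hb0
      injection hb0 with h2
      exact absurd h2 hab.ne
    · rcases Nat.eq_zero_or_pos j with rfl | hjpos
      · rcases hj with ⟨h1, _⟩ | ⟨c, d, hc, hd, hcd⟩
        · rw [hb0] at h1; exact Option.some_ne_none b h1
        · rw [hb0] at hc
          rw [htoc] at hd
          cases hc; cases hd
          exact absurd hcd (not_lt.2 hab.le)
      · have := hlt 0 hjpos
        rw [hb0, htoc] at this
        injection this with h
        exact absurd h hab.ne'
end
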